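/- Concentration bound for completely monotone kernels: let W ⊂ V be a proper subspace, suppose the marginal density of X on V/W is bounded by p₀, and 𝒦(r) = ∫₀^∞ e^{−tr} dν(t). Then E[𝒦(|X−X'|_Σ²)] ≤ (p₀ / √det(Σ_{V/W})) ∫₀^∞ (π t^{-1})^{d_{W'}/2} dν(t), where Σ_{V/W} is the quotient inner product induced by Σ on V/W and d_{W'} = dim(V/W). -/

import Mathlib

open MeasureTheory ProbabilityTheory Real Matrix
open scoped MatrixOrder



/-- Gaussian integral for a positive definite quadratic form on Euclidean space. -/
lemma gauss_aux {m : ℕ} (t : ℝ) (ht : 0 < t) (A : Matrix (Fin m) (Fin m) ℝ)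
    (hA : A.PosDef) :
    Integrable (fun y : EuclideanSpace ℝ (Fin m) =>
        rexp (-t * ∑ i, ∑ j, A i j * y i * y j)) volume ∧
    ∫ y : EuclideanSpace ℝ (Fin m), rexp (-t * ∑ i, ∑ j, A i j * y i * y j) =
      (π / t) ^ ((m : ℝ) / 2) / Real.sqrt A.det := by
  classical
  set S := CFC.sqrt A with hSdef
  have hSmul : S * S = A := CFC.sqrt_mul_sqrt_self A hA.posSemidef.nonneg
  have hPS : S.PosSemidef := (CFC.sqrt_nonneg A).posSemidef
  have hSherm : S.IsHermitian := hPS.1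
  have hST : Sᵀ = S := by
    have := hSherm
    rwa [Matrix.IsHermitian, Matrix.conjTranspose_eq_transpose_of_trivial] at this
  have hAsymm : ∀ i j, A j i = A i j := by
    intro i j
    have := congrFun (congrFun hA.1 i) j
    simpa [Matrix.conjTranspose_apply] using this
  have hdetA : A.det = S.det * S.det := by rw [← hSmul, Matrix.det_mul]
  have hdetA_pos : 0 < A.det := hA.det_pos
  have hSdet_nonneg : 0 ≤ S.det := by
    rw [hSherm.det_eq_prod_eigenvalues]
    exact Finset.prod_nonneg fun i _ => hPS.eigenvalues_nonneg i
  have hSdet_pos : 0 < S.det := by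
    rcases hSdet_nonneg.lt_or_eq with h | h
    · exact h
    · exfalso; rw [hdetA, ← h, mul_zero] at hdetA_pos; exact lt_irrefl 0 hdetA_pos
  have hsqrt : Real.sqrt A.det = S.det := by
    rw [hdetA, Real.sqrt_mul_self hSdet_nonneg]
  -- the linear map z ↦ S z on Euclidean space
  set le := WithLp.linearEquiv 2 ℝ (Fin m → ℝ) with hle
  set T : EuclideanSpace ℝ (Fin m) →ₗ[ℝ] EuclideanSpace ℝ (Fin m) :=
    le.symm.toLinearMap ∘ₗ Matrix.toLin' S ∘ₗ le.toLinearMap with hT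
  have hTdet : LinearMap.det T = S.det := by
    have h1 : T = le.symm.toLinearMap ∘ₗ Matrix.toLin' S ∘ₗ (le.symm).symm.toLinearMap := by
      rw [LinearEquiv.symm_symm]
    rw [h1, show (le.symm.toLinearMap ∘ₗ Matrix.toLin' S ∘ₗ (le.symm).symm.toLinearMap)
        = ((le.symm : (Fin m → ℝ) ≃ₗ[ℝ] EuclideanSpace ℝ (Fin m)) : (Fin m → ℝ) →ₗ[ℝ] _)
          ∘ₗ Matrix.toLin' S ∘ₗ ((le.symm).symm : _ ≃ₗ[ℝ] _).toLinearMap from rfl]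
    rw [LinearMap.det_conj (Matrix.toLin' S) le.symm, LinearMap.det_toLin']
  have hTapp : ∀ (y : EuclideanSpace ℝ (Fin m)) (i : Fin m), T y i = (S.mulVec y) i := by
    intro y i; rfl
  have hquad : ∀ y : EuclideanSpace ℝ (Fin m),
      (∑ i, ∑ j, A i j * y i * y j) = ‖T y‖ ^ 2 := by
    intro y
    have h1 : ‖T y‖ ^ 2 = ∑ i, T y i * T y i := by
      rw [EuclideanSpace.norm_sq_eq]
      simp only [Real.norm_eq_abs, sq, abs_mul_abs_self]
    rw [h1]
    simp_rw [hTapp]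
    have h3 : (∑ i, (S.mulVec y) i * (S.mulVec y) i) = (S.mulVec y) ⬝ᵥ (S.mulVec y) := rfl
    rw [h3, Matrix.dotProduct_mulVec, ← Matrix.mulVec_transpose, hST,
      Matrix.mulVec_mulVec, hSmul]
    simp [dotProduct, Matrix.mulVec, Finset.sum_mul, Finset.mul_sum]
    rw [Finset.sum_comm]
    exact Finset.sum_congr rfl fun i _ => Finset.sum_congr rfl fun j _ => by
      rw [hAsymm i j]
  -- properties of T as a map
  have hTcont : Continuous T := T.continuous_of_finiteDimensional
  have hTdet_ne : LinearMap.det T ≠ 0 := by rw [hTdet]; exact hSdet_pos.ne'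
  have hmap : Measure.map T volume
      = ENNReal.ofReal |(LinearMap.det T)⁻¹| • volume :=
    Measure.map_linearMap_addHaar_eq_smul_addHaar volume hTdet_ne
  -- the standard Gaussian integrand
  have hstd_int : Integrable (fun v : EuclideanSpace ℝ (Fin m) => rexp (-t * ‖v‖ ^ 2)) volume := by
    have hc : Integrable (fun v : EuclideanSpace ℝ (Fin m) =>
        Complex.exp (-(t : ℂ) * (‖v‖ : ℂ) ^ 2)) volume := by
      simpa using GaussianFourier.integrable_cexp_neg_mul_sq_norm_add
        (show 0 < ((t : ℂ)).re by simpa using ht) 0 (0 : EuclideanSpace ℝ (Fin m))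
    have := hc.re
    refine this.congr (Filter.Eventually.of_forall fun v => ?_)
    have : (-(t : ℂ) * (‖v‖ : ℂ) ^ 2) = ((-t * ‖v‖ ^ 2 : ℝ) : ℂ) := by push_cast; ring
    simp only [this]
    rw [show RCLike.re (Complex.exp ((-t * ‖v‖ ^ 2 : ℝ) : ℂ)) = Real.exp (-t * ‖v‖ ^ 2) from Complex.exp_ofReal_re _]
  have hstd_val : ∫ v : EuclideanSpace ℝ (Fin m), rexp (-t * ‖v‖ ^ 2)
      = (π / t) ^ ((m : ℝ) / 2) := by
    have := GaussianFourier.integral_rexp_neg_mul_sq_norm (V := EuclideanSpace ℝ (Fin m)) ht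
    simpa [finrank_euclideanSpace_fin] using this
  have hstd_meas : AEStronglyMeasurable (fun v : EuclideanSpace ℝ (Fin m) => rexp (-t * ‖v‖ ^ 2))
      (Measure.map T volume) := by
    exact (Real.continuous_exp.comp ((continuous_const.mul ((continuous_norm).pow 2)))).aestronglyMeasurable
  constructor
  · have h2 : Integrable (fun v : EuclideanSpace ℝ (Fin m) => rexp (-t * ‖v‖ ^ 2))
        (Measure.map T volume) := by
      rw [hmap]
      exact hstd_int.smul_measure ENNReal.ofReal_ne_top
    have h3 := (integrable_map_measure hstd_meas hTcont.measurable.aemeasurable).mp h2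
    refine h3.congr (Filter.Eventually.of_forall fun y => ?_)
    simp only [Function.comp_apply, hquad y]
  · calc ∫ y : EuclideanSpace ℝ (Fin m), rexp (-t * ∑ i, ∑ j, A i j * y i * y j)
        = ∫ y : EuclideanSpace ℝ (Fin m), rexp (-t * ‖T y‖ ^ 2) := by
          congr 1; funext y; rw [hquad y]
      _ = ∫ v, rexp (-t * ‖v‖ ^ 2) ∂(Measure.map T volume) :=
          (integral_map hTcont.measurable.aemeasurable hstd_meas).symm
      _ = (ENNReal.ofReal |(LinearMap.det T)⁻¹|).toReal
            * ∫ v : EuclideanSpace ℝ (Fin m), rexp (-t * ‖v‖ ^ 2) := by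
          rw [hmap, integral_smul_measure]; rfl
      _ = (π / t) ^ ((m : ℝ) / 2) / Real.sqrt A.det := by
          rw [hstd_val, ENNReal.toReal_ofReal (abs_nonneg _), hTdet, hsqrt,
            abs_of_nonneg (inv_nonneg.mpr hSdet_pos.le)]
          rw [div_eq_mul_inv]; ring

/-- concentration bound for completely monotone kernels.  Model
`V = W ⊕ W'` as a product of Euclidean spaces (so `V/W ≅ W'`, of dimension `m`).
Let `Σ` be a positive semidefinite form `q(x) = ‖Lx‖²` on `V`, whose induced
quotient form on `V/W` — `x' ↦ inf_{w ∈ W} q(w, x')` — is given by the positive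
definite matrix `A` (so `det Σ_{V/W} = det A`).  If the marginal density of `X` on
`V/W` is bounded by `p₀` and `𝒦(r) = ∫₀^∞ e^{−tr} dν(t)` with `ν` a finite measure
on `(0,∞)`, then for an independent copy `X'` of `X`,
`E[𝒦(|X−X'|_Σ²)] ≤ (p₀/√det A) ∫₀^∞ (π/t)^{m/2} dν(t)`. -/
theorem concentration_bound_completely_monotone
    {Ω : Type*} [MeasurableSpace Ω] (μ : Measure Ω) [IsProbabilityMeasure μ]
    (n m : ℕ) (hm : 0 < m)
    (ν : Measure ℝ) [IsFiniteMeasure ν] (hν : ν (Set.Iic 0) = 0)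
    (𝒦 : ℝ → ℝ) (h𝒦 : ∀ r, 𝒦 r = ∫ t, Real.exp (-t * r) ∂ν)
    (hνint : Integrable (fun t => (Real.pi / t) ^ ((m : ℝ) / 2)) ν)
    (dL : ℕ)
    (L : (EuclideanSpace ℝ (Fin n) × EuclideanSpace ℝ (Fin m)) →ₗ[ℝ]
      EuclideanSpace ℝ (Fin dL))
    (q : EuclideanSpace ℝ (Fin n) × EuclideanSpace ℝ (Fin m) → ℝ)
    (hq : ∀ x, q x = ‖L x‖ ^ 2)
    (A : Matrix (Fin m) (Fin m) ℝ) (hA : A.PosDef)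
    (hquot : ∀ x' : EuclideanSpace ℝ (Fin m),
      (⨅ w : EuclideanSpace ℝ (Fin n), q (w, x')) = ∑ i, ∑ j, A i j * x' i * x' j)
    (X X' : Ω → EuclideanSpace ℝ (Fin n) × EuclideanSpace ℝ (Fin m))
    (hX : Measurable X) (hX' : Measurable X')
    (hindep : IndepFun X X' μ) (hid : IdentDistrib X X' μ μ)
    (p₀ : ℝ) (hp₀ : 0 < p₀)
    (hdensity : ∀ S : Set (EuclideanSpace ℝ (Fin m)), MeasurableSet S →
      μ.map (fun ω => (X ω).2) S ≤ ENNReal.ofReal p₀ * volume S) :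
    ∫ ω, 𝒦 (q (X ω - X' ω)) ∂μ ≤
      (p₀ / Real.sqrt A.det) * ∫ t, (Real.pi / t) ^ ((m : ℝ) / 2) ∂ν := by
  classical
  have hq0 : ∀ x, 0 ≤ q x := fun x => by rw [hq x]; positivity
  set B : EuclideanSpace ℝ (Fin m) → ℝ := fun y => ∑ i, ∑ j, A i j * y i * y j with hBdef
  have hqB : ∀ x : EuclideanSpace ℝ (Fin n) × EuclideanSpace ℝ (Fin m), B x.2 ≤ q x := by
    intro x
    have hbdd : BddBelow (Set.range fun w : EuclideanSpace ℝ (Fin n) => q (w, x.2)) := by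
      refine ⟨0, ?_⟩; rintro r ⟨w, rfl⟩; exact hq0 _
    have h := ciInf_le hbdd x.1
    rw [hquot x.2] at h
    simpa using h
  have hB0 : ∀ y, 0 ≤ B y := by
    intro y
    show (0:ℝ) ≤ ∑ i, ∑ j, A i j * y i * y j
    rw [← hquot y]
    exact le_ciInf fun w => hq0 _
  have hqcont : Continuous q := by
    have hqe : q = fun x => ‖L x‖ ^ 2 := funext hq
    rw [hqe]
    exact (L.continuous_of_finiteDimensional.norm).pow 2
  have hBcont : Continuous B := by
    refine continuous_finset_sum _ fun i _ => continuous_finset_sum _ fun j _ => ?_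
    exact (continuous_const.mul (EuclideanSpace.proj i).continuous).mul
      (EuclideanSpace.proj j).continuous
  set Y : Ω → EuclideanSpace ℝ (Fin m) := fun ω => (X ω).2 with hYdef
  set Y' : Ω → EuclideanSpace ℝ (Fin m) := fun ω => (X' ω).2 with hY'def
  have hYm : Measurable Y := measurable_snd.comp hX
  have hY'm : Measurable Y' := measurable_snd.comp hX'
  set κ : Measure (EuclideanSpace ℝ (Fin m)) := μ.map Y with hκdef
  set κ' : Measure (EuclideanSpace ℝ (Fin m)) := μ.map Y' with hκ'def
  haveI : IsProbabilityMeasure κ := Measure.isProbabilityMeasure_map hYm.aemeasurable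
  haveI : IsProbabilityMeasure κ' := Measure.isProbabilityMeasure_map hY'm.aemeasurable
  have hpair : μ.map (fun ω => (Y ω, Y' ω)) = κ.prod κ' :=
    (indepFun_iff_map_prod_eq_prod_map_map hYm.aemeasurable hY'm.aemeasurable).mp
      (hindep.comp measurable_snd measurable_snd)
  have hκle : κ ≤ ENNReal.ofReal p₀ • volume := by
    refine Measure.le_iff.2 fun s hs => ?_
    rw [Measure.smul_apply, smul_eq_mul]
    exact hdensity s hs
  -- key pointwise-in-t bound
  have key : ∀ t : ℝ, 0 < t →
      ∫ ω, Real.exp (-t * q (X ω - X' ω)) ∂μ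
        ≤ p₀ / Real.sqrt A.det * (Real.pi / t) ^ ((m : ℝ) / 2) := by
    intro t ht
    obtain ⟨hGint, hGval⟩ := gauss_aux t ht A hA
    set G : EuclideanSpace ℝ (Fin m) → ℝ := fun y => Real.exp (-t * B y) with hGdef
    have hGint2 : Integrable G volume := hGint
    have hGval2 : ∫ y, G y = (Real.pi / t) ^ ((m : ℝ) / 2) / Real.sqrt A.det := hGval
    have hGcont : Continuous G := Real.continuous_exp.comp (continuous_const.mul hBcont)
    have hGnonneg : ∀ y, 0 ≤ G y := fun y => (Real.exp_pos _).le
    have hGle1 : ∀ y, G y ≤ 1 := fun y =>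
      Real.exp_le_one_iff.2 (by nlinarith [hB0 y])
    have hpt : ∀ ω, Real.exp (-t * q (X ω - X' ω)) ≤ G (Y ω - Y' ω) := by
      intro ω
      have h1 : B ((X ω - X' ω).2) ≤ q (X ω - X' ω) := hqB _
      have h2 : (X ω - X' ω).2 = Y ω - Y' ω := rfl
      rw [h2] at h1
      exact Real.exp_le_exp.2 (by nlinarith)
    have hf1m : Measurable fun ω => Real.exp (-t * q (X ω - X' ω)) :=
      Real.measurable_exp.comp (measurable_const.mul (hqcont.measurable.comp (hX.sub hX')))
    have hf1int : Integrable (fun ω => Real.exp (-t * q (X ω - X' ω))) μ := by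
      refine (integrable_const (1:ℝ)).mono' hf1m.aestronglyMeasurable ?_
      refine Filter.Eventually.of_forall fun ω => ?_
      rw [Real.norm_eq_abs, Real.abs_exp]
      exact Real.exp_le_one_iff.2 (by nlinarith [hq0 (X ω - X' ω)])
    have hf2m : Measurable fun ω => G (Y ω - Y' ω) :=
      hGcont.measurable.comp (hYm.sub hY'm)
    have hf2int : Integrable (fun ω => G (Y ω - Y' ω)) μ := by
      refine (integrable_const (1:ℝ)).mono' hf2m.aestronglyMeasurable ?_
      exact Filter.Eventually.of_forall fun ω => by
        rw [Real.norm_eq_abs, abs_of_nonneg (hGnonneg _)]; exact hGle1 _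
    have step1 : ∫ ω, Real.exp (-t * q (X ω - X' ω)) ∂μ ≤ ∫ ω, G (Y ω - Y' ω) ∂μ :=
      integral_mono hf1int hf2int hpt
    have hGpm : AEStronglyMeasurable
        (fun p : EuclideanSpace ℝ (Fin m) × EuclideanSpace ℝ (Fin m) => G (p.1 - p.2))
        (κ.prod κ') :=
      (hGcont.comp (continuous_fst.sub continuous_snd)).aestronglyMeasurable
    have hprod_int : Integrable
        (fun p : EuclideanSpace ℝ (Fin m) × EuclideanSpace ℝ (Fin m) => G (p.1 - p.2))
        (κ.prod κ') := by
      refine (integrable_const (1:ℝ)).mono' hGpm ?_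
      exact Filter.Eventually.of_forall fun p => by
        rw [Real.norm_eq_abs, abs_of_nonneg (hGnonneg _)]; exact hGle1 _
    have hinner : ∀ x' : EuclideanSpace ℝ (Fin m),
        ∫ x, G (x - x') ∂κ ≤ p₀ * ((Real.pi / t) ^ ((m : ℝ) / 2) / Real.sqrt A.det) := by
      intro x'
      have hGint' : Integrable (fun x => G (x - x')) volume := hGint2.comp_sub_right x'
      have hGint'' : Integrable (fun x => G (x - x')) (ENNReal.ofReal p₀ • volume) :=
        hGint'.smul_measure ENNReal.ofReal_ne_top
      calc ∫ x, G (x - x') ∂κ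
          ≤ ∫ x, G (x - x') ∂(ENNReal.ofReal p₀ • volume) :=
            integral_mono_measure hκle
              (Filter.Eventually.of_forall fun x => hGnonneg _) hGint''
        _ = p₀ * ∫ x, G (x - x') ∂volume := by
            rw [integral_smul_measure, ENNReal.toReal_ofReal hp₀.le, smul_eq_mul]
        _ = p₀ * ∫ x, G x ∂volume := by rw [integral_sub_right_eq_self G x']
        _ = p₀ * ((Real.pi / t) ^ ((m : ℝ) / 2) / Real.sqrt A.det) := by rw [hGval2]
    have step2 : ∫ ω, G (Y ω - Y' ω) ∂μ
        ≤ p₀ * ((Real.pi / t) ^ ((m : ℝ) / 2) / Real.sqrt A.det) := by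
      have hmeas_pair : Measurable fun ω => (Y ω, Y' ω) := hYm.prodMk hY'm
      calc ∫ ω, G (Y ω - Y' ω) ∂μ
          = ∫ p : EuclideanSpace ℝ (Fin m) × EuclideanSpace ℝ (Fin m),
              G (p.1 - p.2) ∂(κ.prod κ') := by
            rw [← hpair, integral_map hmeas_pair.aemeasurable (by rw [hpair]; exact hGpm)]
        _ = ∫ x', ∫ x, G (x - x') ∂κ ∂κ' := integral_prod_symm _ hprod_int
        _ ≤ ∫ _x' : EuclideanSpace ℝ (Fin m),
              (p₀ * ((Real.pi / t) ^ ((m : ℝ) / 2) / Real.sqrt A.det)) ∂κ' :=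
            integral_mono hprod_int.integral_prod_right (integrable_const _)
              fun x' => hinner x'
        _ = p₀ * ((Real.pi / t) ^ ((m : ℝ) / 2) / Real.sqrt A.det) := by
            simp [measure_univ]
    calc ∫ ω, Real.exp (-t * q (X ω - X' ω)) ∂μ
        ≤ p₀ * ((Real.pi / t) ^ ((m : ℝ) / 2) / Real.sqrt A.det) := step1.trans step2
      _ = p₀ / Real.sqrt A.det * (Real.pi / t) ^ ((m : ℝ) / 2) := by ring
  -- Fubini over (ω, t)
  set f : Ω × ℝ → ℝ := fun p => Real.exp (-p.2 * q (X p.1 - X' p.1)) with hfdef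
  have hfm : Measurable f :=
    Real.measurable_exp.comp ((measurable_snd.neg).mul
      (hqcont.measurable.comp ((hX.comp measurable_fst).sub (hX'.comp measurable_fst))))
  have haeprod : ∀ᵐ p ∂(μ.prod ν), 0 < p.2 := by
    rw [MeasureTheory.ae_iff]
    have hset : {p : Ω × ℝ | ¬ 0 < p.2} = (Set.univ : Set Ω) ×ˢ Set.Iic 0 := by
      ext p; simp [not_lt]
    rw [hset, Measure.prod_prod, hν, mul_zero]
  have hfint : Integrable f (μ.prod ν) := by
    refine (integrable_const (1:ℝ)).mono' hfm.aestronglyMeasurable ?_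
    refine haeprod.mono fun p hp => ?_
    rw [Real.norm_eq_abs, Real.abs_exp]
    exact Real.exp_le_one_iff.2 (by nlinarith [hq0 (X p.1 - X' p.1)])
  have haeν : ∀ᵐ t ∂ν, 0 < t := by
    rw [MeasureTheory.ae_iff]
    have hset : {t : ℝ | ¬ 0 < t} = Set.Iic 0 := by ext t; simp [not_lt]
    rw [hset, hν]
  calc ∫ ω, 𝒦 (q (X ω - X' ω)) ∂μ
      = ∫ ω, ∫ t, f (ω, t) ∂ν ∂μ := by simp only [h𝒦, hfdef]
    _ = ∫ p, f p ∂(μ.prod ν) := (integral_prod f hfint).symm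
    _ = ∫ t, ∫ ω, f (ω, t) ∂μ ∂ν := integral_prod_symm f hfint
    _ ≤ ∫ t, p₀ / Real.sqrt A.det * (Real.pi / t) ^ ((m : ℝ) / 2) ∂ν := by
        refine integral_mono_ae hfint.integral_prod_right (hνint.const_mul _) ?_
        exact haeν.mono fun t ht => key t ht
    _ = (p₀ / Real.sqrt A.det) * ∫ t, (Real.pi / t) ^ ((m : ℝ) / 2) ∂ν :=
        integral_const_mul _ _
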